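/- For the control â and cost J(t,â) := ∫_t^1 c(s)·â(s)·(∫_s^1 â(r) dr) ds, one has J(t, â) < 0 for every t ∈ [0,1). Since J(t, 0) = 0 for all t, the control â strictly Pareto dominates the zero control: J(t, â) < J(t, 0) for all t < 1 and J(1, â) = J(1, 0) = 0. -/

import Mathlib

open MeasureTheory Set
noncomputable def tn (n : ℕ) : ℝ := 1 - 1 / 2 ^ n
noncomputable def sn (n : ℕ) : ℝ := (tn n + 3 * tn (n + 1)) / 4
noncomputable def c (x : ℝ) : ℝ :=
  ∑' n : ℕ, ((Ico (tn n) (sn n)).indicator (fun _ => (1 : ℝ)) x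
    + 6 * (Ico (sn n) (tn (n + 1))).indicator (fun _ => (1 : ℝ)) x)
noncomputable def ahat (x : ℝ) : ℝ :=
  ∑' n : ℕ, ((Ico (tn n) (sn n)).indicator (fun _ => (1 : ℝ)) x
    - (Ico (sn n) (tn (n + 1))).indicator (fun _ => (1 : ℝ)) x)
lemma tn_eq (n : ℕ) : tn n = 1 - (1/2:ℝ)^n := by simp [tn, div_pow]
lemma tn_succ_eq (n : ℕ) : tn (n+1) = 1 - (1/2:ℝ)^n/2 := by rw [tn_eq, pow_succ]; ring
lemma sn_eq (n : ℕ) : sn n = 1 - 5*(1/2:ℝ)^n/8 := by rw [sn, tn_eq, tn_succ_eq]; ring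
lemma L_pos (n : ℕ) : 0 < (1/2:ℝ)^n := by positivity
lemma L_le_one (n : ℕ) : (1/2:ℝ)^n ≤ 1 := pow_le_one₀ (by norm_num) (by norm_num)
lemma tn_lt_sn (n : ℕ) : tn n < sn n := by rw [tn_eq, sn_eq]; have := L_pos n; linarith
lemma sn_lt_tn (n : ℕ) : sn n < tn (n+1) := by rw [sn_eq, tn_succ_eq]; have := L_pos n; linarith
lemma tn_nonneg (n : ℕ) : 0 ≤ tn n := by rw [tn_eq]; have := L_le_one n; linarith
lemma tn_lt_one (n : ℕ) : tn n < 1 := by rw [tn_eq]; have := L_pos n; linarith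
lemma tn_mono : StrictMono tn := strictMono_nat_of_lt_succ fun n => (tn_lt_sn n).trans (sn_lt_tn n)

lemma not_mem_of_ne {x : ℝ} {n m : ℕ} (hx : x ∈ Ico (tn n) (tn (n+1))) (hm : m ≠ n) :
    x ∉ Ico (tn m) (tn (m+1)) := by
  rcases lt_or_gt_of_ne hm with h | h
  · intro hc
    exact absurd (hc.2.trans_le ((tn_mono.le_iff_le).2 h)) (not_lt.2 hx.1)
  · intro hc
    exact absurd (hx.2.trans_le ((tn_mono.le_iff_le).2 h)) (not_lt.2 hc.1)

lemma sub_mem1 (n : ℕ) : Ico (tn n) (sn n) ⊆ Ico (tn n) (tn (n+1)) :=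
  Ico_subset_Ico le_rfl (sn_lt_tn n).le
lemma sub_mem2 (n : ℕ) : Ico (sn n) (tn (n+1)) ⊆ Ico (tn n) (tn (n+1)) :=
  Ico_subset_Ico (tn_lt_sn n).le le_rfl

lemma ahat_term_zero {x : ℝ} {m : ℕ} (h : x ∉ Ico (tn m) (tn (m+1))) :
    (Ico (tn m) (sn m)).indicator (fun _ => (1:ℝ)) x = 0 ∧
    (Ico (sn m) (tn (m+1))).indicator (fun _ => (1:ℝ)) x = 0 :=
  ⟨indicator_of_notMem (fun hc => h (sub_mem1 m hc)) _,
   indicator_of_notMem (fun hc => h (sub_mem2 m hc)) _⟩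

lemma ahat_eq_one {x : ℝ} {n : ℕ} (hx : x ∈ Ico (tn n) (sn n)) : ahat x = 1 := by
  rw [ahat, tsum_eq_single n]
  · rw [indicator_of_mem hx, indicator_of_notMem (fun hc => absurd (hc.1.trans_lt hx.2) (lt_irrefl _))]
    norm_num
  · intro m hm
    obtain ⟨h1, h2⟩ := ahat_term_zero (not_mem_of_ne (sub_mem1 n hx) hm)
    rw [h1, h2]; ring
lemma c_eq_one {x : ℝ} {n : ℕ} (hx : x ∈ Ico (tn n) (sn n)) : c x = 1 := by
  rw [c, tsum_eq_single n]
  · rw [indicator_of_mem hx, indicator_of_notMem (fun hc => absurd (hc.1.trans_lt hx.2) (lt_irrefl _))]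
    norm_num
  · intro m hm
    obtain ⟨h1, h2⟩ := ahat_term_zero (not_mem_of_ne (sub_mem1 n hx) hm)
    rw [h1, h2]; ring
lemma ahat_eq_neg_one {x : ℝ} {n : ℕ} (hx : x ∈ Ico (sn n) (tn (n+1))) : ahat x = -1 := by
  rw [ahat, tsum_eq_single n]
  · rw [indicator_of_mem hx, indicator_of_notMem (fun hc => absurd (hx.1.trans_lt hc.2) (lt_irrefl _))]
    norm_num
  · intro m hm
    obtain ⟨h1, h2⟩ := ahat_term_zero (not_mem_of_ne (sub_mem2 n hx) hm)
    rw [h1, h2]; ring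
lemma c_eq_six {x : ℝ} {n : ℕ} (hx : x ∈ Ico (sn n) (tn (n+1))) : c x = 6 := by
  rw [c, tsum_eq_single n]
  · rw [indicator_of_mem hx, indicator_of_notMem (fun hc => absurd (hx.1.trans_lt hc.2) (lt_irrefl _))]
    norm_num
  · intro m hm
    obtain ⟨h1, h2⟩ := ahat_term_zero (not_mem_of_ne (sub_mem2 n hx) hm)
    rw [h1, h2]; ring
lemma ahat_eq_zero {x : ℝ} (h : ∀ m, x ∉ Ico (tn m) (tn (m+1))) : ahat x = 0 ∧ c x = 0 := by
  constructor
  · rw [ahat]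
    convert tsum_zero with m
    obtain ⟨h1, h2⟩ := ahat_term_zero (h m)
    rw [h1, h2]; ring
  · rw [c]
    convert tsum_zero with m
    obtain ⟨h1, h2⟩ := ahat_term_zero (h m)
    rw [h1, h2]; ring
lemma exists_mem {x : ℝ} (h0 : 0 ≤ x) (h1 : x < 1) : ∃ n, x ∈ Ico (tn n) (tn (n+1)) := by
  have hd : 0 < 1 - x := by linarith
  have hP : ∃ n : ℕ, (1/2:ℝ)^(n+1) < 1 - x := by
    obtain ⟨n, hn⟩ := exists_pow_lt_of_lt_one hd (by norm_num : (1/2:ℝ) < 1)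
    exact ⟨n, lt_of_le_of_lt (pow_le_pow_of_le_one (by norm_num) (by norm_num) (Nat.le_succ n)) hn⟩
  classical
  set n := Nat.find hP with hn
  have hfind := Nat.find_spec hP
  refine ⟨n, ?_, ?_⟩
  · rw [tn_eq]
    rcases Nat.eq_zero_or_pos n with h | h
    · rw [h]; simpa using h0
    · have := Nat.find_min hP (m := n - 1) (by omega)
      push_neg at this
      have : (1/2:ℝ)^(n-1+1) = (1/2:ℝ)^n := by congr 1; omega
      rw [this] at *
      have h2 : 1 - x ≤ (1/2:ℝ)^n := by
        have := Nat.find_min hP (m := n - 1) (by omega)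
        push_neg at this
        calc 1 - x ≤ (1/2:ℝ)^(n-1+1) := this
        _ = (1/2:ℝ)^n := by congr 1; omega
      linarith
  · rw [tn_succ_eq]
    have : (1/2:ℝ)^(n+1) = (1/2:ℝ)^n/2 := by rw [pow_succ]; ring
    rw [this] at hfind; linarith

noncomputable def S1 : Set ℝ := ⋃ n, Ico (tn n) (sn n)
noncomputable def S2 : Set ℝ := ⋃ n, Ico (sn n) (tn (n+1))

lemma not_mem_both {x : ℝ} (h1 : x ∈ S1) (h2 : x ∈ S2) : False := by
  obtain ⟨_, ⟨n, rfl⟩, hn⟩ := h1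
  obtain ⟨_, ⟨m, rfl⟩, hm⟩ := h2
  by_cases hmn : m = n
  · subst hmn; exact absurd (hn.2.trans_le hm.1) (lt_irrefl x).elim
  · exact not_mem_of_ne (sub_mem1 n hn) hmn (sub_mem2 m hm)

lemma trichotomy (x : ℝ) :
    (x ∈ S1 ∧ x ∉ S2 ∧ ahat x = 1 ∧ c x = 1) ∨
    (x ∉ S1 ∧ x ∈ S2 ∧ ahat x = -1 ∧ c x = 6) ∨
    (x ∉ S1 ∧ x ∉ S2 ∧ ahat x = 0 ∧ c x = 0) := by
  by_cases h1 : x ∈ S1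
  · obtain ⟨_, ⟨n, rfl⟩, hn⟩ := id h1
    exact Or.inl ⟨h1, fun h2 => not_mem_both h1 h2, ahat_eq_one hn, c_eq_one hn⟩
  · by_cases h2 : x ∈ S2
    · obtain ⟨_, ⟨n, rfl⟩, hn⟩ := id h2
      exact Or.inr (Or.inl ⟨h1, h2, ahat_eq_neg_one hn, c_eq_six hn⟩)
    · refine Or.inr (Or.inr ⟨h1, h2, ahat_eq_zero fun m hm => ?_⟩)
      rw [← Ico_union_Ico_eq_Ico (tn_lt_sn m).le (sn_lt_tn m).le] at hm
      rcases hm with hm | hm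
      · exact h1 ⟨_, ⟨m, rfl⟩, hm⟩
      · exact h2 ⟨_, ⟨m, rfl⟩, hm⟩

lemma ahat_repr : ahat = fun x =>
    S1.indicator (fun _ => (1:ℝ)) x - S2.indicator (fun _ => (1:ℝ)) x := by
  funext x
  rcases trichotomy x with ⟨h1, h2, ha, _⟩ | ⟨h1, h2, ha, _⟩ | ⟨h1, h2, ha, _⟩ <;>
    simp [ha, indicator_of_mem, indicator_of_notMem, h1, h2]

lemma c_repr : c = fun x =>
    S1.indicator (fun _ => (1:ℝ)) x + 6 * S2.indicator (fun _ => (1:ℝ)) x := by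
  funext x
  rcases trichotomy x with ⟨h1, h2, _, hc⟩ | ⟨h1, h2, _, hc⟩ | ⟨h1, h2, _, hc⟩ <;>
    simp [hc, indicator_of_mem, indicator_of_notMem, h1, h2]

lemma measurableSet_S1 : MeasurableSet S1 := MeasurableSet.iUnion fun n => measurableSet_Ico
lemma measurableSet_S2 : MeasurableSet S2 := MeasurableSet.iUnion fun n => measurableSet_Ico

lemma measurable_ahat : Measurable ahat := by
  rw [ahat_repr]
  exact ((measurable_const.indicator measurableSet_S1).sub
    (measurable_const.indicator measurableSet_S2))

lemma measurable_c : Measurable c := by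
  rw [c_repr]
  exact ((measurable_const.indicator measurableSet_S1).add
    ((measurable_const.indicator measurableSet_S2).const_mul 6))

lemma ahat_abs_le (x : ℝ) : |ahat x| ≤ 1 := by
  rcases trichotomy x with ⟨_, _, ha, _⟩ | ⟨_, _, ha, _⟩ | ⟨_, _, ha, _⟩ <;> rw [ha] <;> norm_num
lemma c_abs_le (x : ℝ) : |c x| ≤ 6 := by
  rcases trichotomy x with ⟨_, _, _, hc⟩ | ⟨_, _, _, hc⟩ | ⟨_, _, _, hc⟩ <;> rw [hc] <;> norm_num

lemma bounded_ii {g : ℝ → ℝ} (hg : Measurable g) {M : ℝ} (hM : ∀ x, |g x| ≤ M) (a b : ℝ) :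
    IntervalIntegrable g volume a b := by
  constructor <;>
  · apply Measure.integrableOn_of_bounded (M := M) measure_Ioc_lt_top.ne
      hg.aestronglyMeasurable
    · exact Filter.Eventually.of_forall fun x => hM x

lemma ahat_ii (a b : ℝ) : IntervalIntegrable ahat volume a b :=
  bounded_ii measurable_ahat ahat_abs_le a b

noncomputable def A (s : ℝ) : ℝ := ∫ r in s..1, ahat r

lemma A_split (a b : ℝ) : A a = (∫ r in a..b, ahat r) + A b := by
  rw [A, A, ← intervalIntegral.integral_add_adjacent_intervals (ahat_ii a b) (ahat_ii b 1)]

lemma continuous_A : Continuous A := by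
  have : A = fun s => -∫ r in (1:ℝ)..s, ahat r := by
    funext s; rw [A, intervalIntegral.integral_symm]
  rw [this]
  exact (intervalIntegral.continuous_primitive ahat_ii 1).neg

lemma A_abs_le {s : ℝ} (hs : s ≤ 1) : |A s| ≤ 1 - s := by
  have := intervalIntegral.norm_integral_le_of_norm_le_const (a := s) (b := 1) (C := 1)
    (f := ahat) (fun x _ => by simpa using ahat_abs_le x)
  simpa [A, abs_of_nonneg (by linarith : (0:ℝ) ≤ 1 - s)] using this

-- integral of a function equal to h on Ico a b
lemma integral_congr_Ico {g h : ℝ → ℝ} {a b : ℝ} (hab : a ≤ b)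
    (hgh : ∀ x ∈ Ico a b, g x = h x) :
    ∫ x in a..b, g x = ∫ x in a..b, h x := by
  apply intervalIntegral.integral_congr_ae
  rw [MeasureTheory.ae_iff]
  apply measure_mono_null (t := {b}) ?_ (Real.volume_singleton)
  intro x hx
  simp only [mem_setOf_eq, not_forall] at hx
  obtain ⟨hmem, hne⟩ := hx
  rw [uIoc_of_le hab] at hmem
  by_contra hxb
  exact hne (hgh x ⟨hmem.1.le, lt_of_le_of_ne hmem.2 hxb⟩)

lemma integral_affine (a b p q : ℝ) : ∫ x in a..b, (p + q * x) = p*(b-a) + q*(b^2-a^2)/2 := by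
  have h1 : IntervalIntegrable (fun _ : ℝ => p) volume a b := intervalIntegrable_const
  have h2 : IntervalIntegrable (fun x : ℝ => q * x) volume a b :=
    (continuous_const.mul continuous_id).intervalIntegrable a b
  rw [intervalIntegral.integral_add h1 h2, intervalIntegral.integral_const,
    intervalIntegral.integral_const_mul, integral_id, smul_eq_mul]
  ring

lemma int_eq_const {g : ℝ → ℝ} {a b κ : ℝ} (hab : a ≤ b) (h : ∀ x ∈ Ico a b, g x = κ) :
    ∫ x in a..b, g x = κ * (b - a) := by
  rw [integral_congr_Ico hab h, intervalIntegral.integral_const, smul_eq_mul, mul_comm]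

lemma eq_zero_of_abs_le_geom {x r C : ℝ} (hr0 : 0 ≤ r) (hr : r < 1)
    (h : ∀ m : ℕ, |x| ≤ C * r ^ m) : x = 0 := by
  have ht : Filter.Tendsto (fun m : ℕ => C * r ^ m) Filter.atTop (nhds 0) := by
    simpa using (tendsto_pow_atTop_nhds_zero_of_lt_one hr0 hr).const_mul C
  have : |x| ≤ 0 := ge_of_tendsto ht (Filter.Eventually.of_forall h)
  exact abs_eq_zero.1 (le_antisymm this (abs_nonneg x))

lemma ahat_zero_outside {x : ℝ} (h : x < 0 ∨ 1 ≤ x) : ahat x = 0 ∧ c x = 0 := by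
  apply ahat_eq_zero
  intro m hm
  rcases h with h | h
  · exact absurd (le_trans (tn_nonneg m) hm.1) (not_le.2 h)
  · exact absurd (hm.2.trans_le (le_trans (tn_lt_one (m+1)).le le_rfl)) (not_lt.2 h)

lemma A_abs_le_one (s : ℝ) : |A s| ≤ 1 := by
  rcases le_or_gt 0 s with h0 | h0
  · rcases le_or_gt s 1 with h1 | h1
    · exact (A_abs_le h1).trans (by linarith)
    · have : A s = A s - A 1 + A 1 := by ring
      have hA1 : A 1 = 0 := by rw [A, intervalIntegral.integral_same]
      have : A s = -∫ r in (1:ℝ)..s, ahat r := by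
        have := A_split 1 s
        rw [hA1] at this; linarith [this]
      rw [this, int_eq_const h1.le (fun x hx => (ahat_zero_outside (Or.inr hx.1)).1)]
      simp
  · have : A s = (∫ r in s..0, ahat r) + A 0 := A_split s 0
    rw [this, int_eq_const h0.le (fun x hx => (ahat_zero_outside (Or.inl hx.2)).1)]
    have := A_abs_le (le_of_lt one_pos : (0:ℝ) ≤ 1)
    simp only [zero_mul, zero_add]
    simpa using A_abs_le (by norm_num : (0:ℝ) ≤ 1)

-- A at the grid points
lemma A_step (m : ℕ) : A (tn m) = (1/2:ℝ)^m/4 + A (tn (m+1)) := by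
  have h1 : ∫ r in tn m..sn m, ahat r = 1 * (sn m - tn m) :=
    int_eq_const (tn_lt_sn m).le fun x hx => ahat_eq_one hx
  have h2 : ∫ r in sn m..tn (m+1), ahat r = (-1) * (tn (m+1) - sn m) :=
    int_eq_const (sn_lt_tn m).le fun x hx => ahat_eq_neg_one hx
  have hsplit : ∫ r in tn m..tn (m+1), ahat r =
      (∫ r in tn m..sn m, ahat r) + ∫ r in sn m..tn (m+1), ahat r :=
    (intervalIntegral.integral_add_adjacent_intervals (ahat_ii _ _) (ahat_ii _ _)).symm
  have := A_split (tn m) (tn (m+1))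
  rw [hsplit, h1, h2] at this
  rw [this, tn_eq, sn_eq, tn_succ_eq]
  ring

lemma A_tn (m : ℕ) : A (tn m) = (1/2:ℝ)^m/2 := by
  have key : ∀ k : ℕ, A (tn 0) - (1/2:ℝ)^0/2 = A (tn k) - (1/2:ℝ)^k/2 := by
    intro k
    induction k with
    | zero => rfl
    | succ k ih =>
      rw [ih, A_step k, pow_succ]
      ring
  have h0 : A (tn 0) - (1/2:ℝ)^0/2 = 0 := by
    apply eq_zero_of_abs_le_geom (r := 1/2) (C := 2) (by norm_num) (by norm_num)
    intro k
    rw [key k]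
    have h1 : |A (tn k)| ≤ (1/2:ℝ)^k := by
      calc |A (tn k)| ≤ 1 - tn k := A_abs_le (tn_lt_one k).le
        _ = (1/2:ℝ)^k := by rw [tn_eq]; ring
    have h2 : |(1/2:ℝ)^k/2| = (1/2:ℝ)^k/2 := abs_of_nonneg (by positivity)
    calc |A (tn k) - (1/2:ℝ)^k/2| ≤ |A (tn k)| + |(1/2:ℝ)^k/2| := abs_sub _ _
      _ ≤ (1/2:ℝ)^k + (1/2:ℝ)^k/2 := by rw [h2]; linarith
      _ ≤ 2 * (1/2:ℝ)^k := by linarith [L_pos k]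
  have hk := key m
  norm_num at hk h0
  linarith

lemma A_piece2 {s : ℝ} {n : ℕ} (hs : s ∈ Icc (sn n) (tn (n+1))) :
    A s = s - 1 + 3*(1/2:ℝ)^n/4 := by
  have h2 : ∫ r in s..tn (n+1), ahat r = (-1) * (tn (n+1) - s) := by
    apply int_eq_const hs.2
    intro x hx
    exact ahat_eq_neg_one ⟨le_trans hs.1 hx.1, hx.2⟩
  have := A_split s (tn (n+1))
  rw [h2, A_tn (n+1), pow_succ] at this
  rw [this, tn_succ_eq]
  ring

lemma A_piece1 {s : ℝ} {n : ℕ} (hs : s ∈ Icc (tn n) (sn n)) :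
    A s = 1 - (1/2:ℝ)^n/2 - s := by
  have h1 : ∫ r in s..sn n, ahat r = 1 * (sn n - s) := by
    apply int_eq_const hs.2
    intro x hx
    exact ahat_eq_one ⟨le_trans hs.1 hx.1, hx.2⟩
  have hsn : A (sn n) = sn n - 1 + 3*(1/2:ℝ)^n/4 :=
    A_piece2 ⟨le_rfl, (sn_lt_tn n).le⟩
  have := A_split s (sn n)
  rw [h1, hsn] at this
  rw [this, sn_eq]
  ring

noncomputable def J (t : ℝ) (α : ℝ → ℝ) : ℝ :=
  ∫ s in t..1, c s * α s * ∫ r in s..1, α r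

noncomputable def F (s : ℝ) : ℝ := c s * ahat s * A s

lemma J_ahat (t : ℝ) : J t ahat = ∫ s in t..1, F s := rfl

lemma F_abs_le (x : ℝ) : |F x| ≤ 6 := by
  rw [F, abs_mul, abs_mul]
  calc |c x| * |ahat x| * |A x| ≤ 6 * 1 * 1 := by
        apply mul_le_mul (mul_le_mul (c_abs_le x) (ahat_abs_le x) (abs_nonneg _) (by norm_num))
          (A_abs_le_one x) (abs_nonneg _) (by norm_num)
    _ = 6 := by norm_num

lemma measurable_F : Measurable F :=
  (measurable_c.mul measurable_ahat).mul continuous_A.measurable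

lemma F_ii (a b : ℝ) : IntervalIntegrable F volume a b :=
  bounded_ii measurable_F F_abs_le a b

lemma J_split (a b : ℝ) : J a ahat = (∫ s in a..b, F s) + J b ahat := by
  rw [J_ahat, J_ahat, ← intervalIntegral.integral_add_adjacent_intervals (F_ii a b) (F_ii b 1)]

lemma F_piece1 {x : ℝ} {n : ℕ} (hx : x ∈ Ico (tn n) (sn n)) :
    F x = (1 - (1/2:ℝ)^n/2) + (-1) * x := by
  rw [F, ahat_eq_one hx, c_eq_one hx, A_piece1 ⟨hx.1, hx.2.le⟩]
  ring

lemma F_piece2 {x : ℝ} {n : ℕ} (hx : x ∈ Ico (sn n) (tn (n+1))) :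
    F x = (6 - 9*(1/2:ℝ)^n/2) + (-6) * x := by
  rw [F, ahat_eq_neg_one hx, c_eq_six hx, A_piece2 ⟨hx.1, hx.2.le⟩]
  ring

lemma int_F_piece1 {t : ℝ} {n : ℕ} (ht : t ∈ Icc (tn n) (sn n)) :
    ∫ s in t..sn n, F s =
      (1 - (1/2:ℝ)^n/2)*(sn n - t) + (-1)*((sn n)^2 - t^2)/2 := by
  rw [integral_congr_Ico ht.2 (fun x hx => F_piece1 ⟨le_trans ht.1 hx.1, hx.2⟩),
    integral_affine]

lemma int_F_piece2 {t : ℝ} {n : ℕ} (ht : t ∈ Icc (sn n) (tn (n+1))) :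
    ∫ s in t..tn (n+1), F s =
      (6 - 9*(1/2:ℝ)^n/2)*(tn (n+1) - t) + (-6)*((tn (n+1))^2 - t^2)/2 := by
  rw [integral_congr_Ico ht.2 (fun x hx => F_piece2 ⟨le_trans ht.1 hx.1, hx.2⟩),
    integral_affine]

lemma J_step (m : ℕ) : J (tn m) ahat = -3*((1/2:ℝ)^m)^2/128 + J (tn (m+1)) ahat := by
  have hsplit : ∫ s in tn m..tn (m+1), F s =
      (∫ s in tn m..sn m, F s) + ∫ s in sn m..tn (m+1), F s :=
    (intervalIntegral.integral_add_adjacent_intervals (F_ii _ _) (F_ii _ _)).symm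
  have h1 := int_F_piece1 (n := m) ⟨le_rfl, (tn_lt_sn m).le⟩
  have h2 := int_F_piece2 (n := m) ⟨le_rfl, (sn_lt_tn m).le⟩
  have := J_split (tn m) (tn (m+1))
  rw [hsplit, h1, h2] at this
  rw [this, tn_eq, sn_eq, tn_succ_eq]
  ring

lemma J_bound (m : ℕ) : |J (tn m) ahat| ≤ 6 * ((1/2:ℝ)^m)^2 := by
  rw [J_ahat]
  have hb : ∀ x ∈ uIoc (tn m) 1, ‖F x‖ ≤ 6 * (1/2:ℝ)^m := by
    intro x hx
    rw [uIoc_of_le (tn_lt_one m).le] at hx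
    have h1 : |A x| ≤ 1 - x := A_abs_le hx.2
    have h2 : 1 - x ≤ (1/2:ℝ)^m := by
      have := hx.1; rw [tn_eq] at this; linarith
    rw [Real.norm_eq_abs, F, abs_mul, abs_mul]
    calc |c x| * |ahat x| * |A x| ≤ 6 * 1 * (1/2:ℝ)^m := by
          apply mul_le_mul (mul_le_mul (c_abs_le x) (ahat_abs_le x) (abs_nonneg _) (by norm_num))
            (h1.trans h2) (abs_nonneg _) (by norm_num)
      _ = 6 * (1/2:ℝ)^m := by ring
  have := intervalIntegral.norm_integral_le_of_norm_le_const hb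
  rw [Real.norm_eq_abs] at this
  have habs : |1 - tn m| = (1/2:ℝ)^m := by
    rw [tn_eq, abs_of_nonneg (by linarith [L_pos m])]; ring
  rw [habs] at this
  calc |∫ s in tn m..1, F s| ≤ 6 * (1/2:ℝ)^m * (1/2:ℝ)^m := this
    _ = 6 * ((1/2:ℝ)^m)^2 := by ring

lemma J_tn (m : ℕ) : J (tn m) ahat = -((1/2:ℝ)^m)^2/32 := by
  have key : ∀ k : ℕ, J (tn 0) ahat + ((1/2:ℝ)^0)^2/32 = J (tn k) ahat + ((1/2:ℝ)^k)^2/32 := by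
    intro k
    induction k with
    | zero => rfl
    | succ k ih =>
      rw [ih, J_step k, pow_succ]
      ring
  have h0 : J (tn 0) ahat + ((1/2:ℝ)^0)^2/32 = 0 := by
    apply eq_zero_of_abs_le_geom (r := 1/4) (C := 7) (by norm_num) (by norm_num)
    intro k
    rw [key k]
    have hq : ((1/2:ℝ)^k)^2 = (1/4:ℝ)^k := by
      rw [← pow_mul, pow_mul']
      norm_num
    have h2 : |((1/2:ℝ)^k)^2/32| = (1/4:ℝ)^k/32 := by
      rw [abs_of_nonneg (by positivity), hq]
    calc |J (tn k) ahat + ((1/2:ℝ)^k)^2/32| ≤ |J (tn k) ahat| + |((1/2:ℝ)^k)^2/32| :=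
          abs_add_le _ _
      _ ≤ 6 * (1/4:ℝ)^k + (1/4:ℝ)^k/32 := by rw [h2]; have hb := J_bound k; rw [hq] at hb; linarith
      _ ≤ 7 * (1/4:ℝ)^k := by linarith [L_pos k, pow_pos (by norm_num : (0:ℝ) < 1/4) k]
  have hk := key m
  norm_num at hk h0
  linarith

theorem stmt8 :
    (∀ t ∈ Ico (0 : ℝ) 1, J t ahat < 0 ∧ J t ahat < J t (fun _ => 0)) ∧
    J 1 ahat = J 1 (fun _ => 0) := by
  have hzero : ∀ t : ℝ, J t (fun _ => 0) = 0 := by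
    intro t; simp [J]
  constructor
  · intro t ht
    have hneg : J t ahat < 0 := by
      obtain ⟨n, hn⟩ := exists_mem ht.1 ht.2
      have hL := L_pos n
      have hL1 := L_le_one n
      have hJb : J (tn (n+1)) ahat = -((1/2:ℝ)^n)^2/128 := by
        rw [J_tn (n+1), pow_succ]
        ring
      by_cases hcase : t < sn n
      · have ht1 : t ∈ Icc (tn n) (sn n) := ⟨hn.1, hcase.le⟩
        have e1 := int_F_piece1 ht1
        have e2 := int_F_piece2 (n := n) ⟨le_rfl, (sn_lt_tn n).le⟩
        have hJ : J t ahat = ((1 - (1/2:ℝ)^n/2)*(sn n - t) + (-1)*((sn n)^2 - t^2)/2)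
            + (((6 - 9*(1/2:ℝ)^n/2)*(tn (n+1) - sn n) + (-6)*((tn (n+1))^2 - (sn n)^2)/2)
            + -((1/2:ℝ)^n)^2/128) := by
          rw [J_split t (sn n), J_split (sn n) (tn (n+1)), e1, e2, hJb]
        have hlo : 1 - (1/2:ℝ)^n ≤ t := by
          have := hn.1; rw [tn_eq] at this; linarith
        have hhi : t ≤ 1 - 5*(1/2:ℝ)^n/8 := by
          have := hcase.le; rw [sn_eq] at this; linarith
        rw [sn_eq, tn_succ_eq] at hJ
        rw [hJ]
        nlinarith [sq_nonneg ((1/2:ℝ)^n/2 - (1 - (1/2:ℝ)^n/2 - t)), mul_pos hL hL,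
          sq_nonneg (1 - (1/2:ℝ)^n/2 - t), mul_nonneg (sub_nonneg.2 hlo) hL.le]
      · have ht2 : t ∈ Icc (sn n) (tn (n+1)) := ⟨not_lt.1 hcase, hn.2.le⟩
        have e2 := int_F_piece2 ht2
        have hJ : J t ahat = ((6 - 9*(1/2:ℝ)^n/2)*(tn (n+1) - t) + (-6)*((tn (n+1))^2 - t^2)/2)
            + -((1/2:ℝ)^n)^2/128 := by
          rw [J_split t (tn (n+1)), e2, hJb]
        have hlo : 1 - 5*(1/2:ℝ)^n/8 ≤ t := by
          have := ht2.1; rw [sn_eq] at this; linarith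
        have hhi : t ≤ 1 - (1/2:ℝ)^n/2 := by
          have := ht2.2; rw [tn_succ_eq] at this; linarith
        rw [tn_succ_eq] at hJ
        rw [hJ]
        nlinarith [mul_pos hL hL, sq_nonneg (t - 1 + (1/2:ℝ)^n/2),
          mul_nonneg (sub_nonneg.2 hlo) hL.le]
    exact ⟨hneg, by rw [hzero]; exact hneg⟩
  · rw [hzero, J_ahat, intervalIntegral.integral_same]
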